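/- Let d, T be natural numbers with 1 ≤ d ≤ T, and H ≥ 0 a real. Set p = √(d/T). Let A be a type, u : A → Fin d → ℝ with 0 ≤ u(a, θ) ≤ H for all a, θ, and M : (Fin d → ℕ) → A satisfying: for every φ : Fin d → ℕ and every a ∈ A, ∑_{θ} φ(θ)·u(M(φ), θ) ≥ ∑_{θ} φ(θ)·u(a, θ). Let θ : Fin T → Fin d be any sequence and define φ(t)(θ') = |{s ∈ Fin T : s < t and θ(s) = θ'}|. Then for every a* ∈ A, ∑'_{k : Fin d → ℕ} p^d·(1−p)^{∑_{θ'} k(θ')} · (∑_{t ∈ Fin T} (u(a*, θ(t)) − u(M(φ(t) + k), θ(t)))) ≤ 2·H·√(d·T). -/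

import Mathlib

open Finset

lemma geomPi {r : ℝ} (h0 : 0 ≤ r) (h1 : r < 1) (n : ℕ) :
    (Summable fun k : Fin n → ℕ => r ^ (∑ i, k i)) ∧
      (∑' k : Fin n → ℕ, r ^ (∑ i, k i)) = (1 - r)⁻¹ ^ n := by
  induction n with
  | zero =>
    constructor
    · exact Summable.of_finite
    · rw [tsum_eq_single (default : Fin 0 → ℕ)
        (by intro b hb; exact absurd (Subsingleton.elim b default) hb)]
      simp
  | succ n ih =>
    let e : (ℕ × (Fin n → ℕ)) ≃ (Fin (n+1) → ℕ) := Fin.consEquiv fun _ => ℕ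
    have hcomp : ∀ q : ℕ × (Fin n → ℕ),
        r ^ (∑ i : Fin (n+1), (e q) i) = r ^ q.1 * r ^ (∑ i, q.2 i) := by
      intro q
      have he : e q = Fin.cons q.1 q.2 := rfl
      rw [he, Fin.sum_cons, pow_add]
    have hg := summable_geometric_of_lt_one h0 h1
    have hsum2 : Summable fun q : ℕ × (Fin n → ℕ) => r ^ q.1 * r ^ (∑ i, q.2 i) := by
      apply Summable.mul_of_nonneg hg ih.1
      · exact fun m => pow_nonneg h0 m
      · exact fun k => pow_nonneg h0 _
    have hs : Summable fun k : Fin (n+1) → ℕ => r ^ (∑ i, k i) := by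
      rw [← e.summable_iff]
      exact hsum2.congr fun q => (hcomp q).symm
    refine ⟨hs, ?_⟩
    calc (∑' k : Fin (n+1) → ℕ, r ^ (∑ i, k i))
        = ∑' q : ℕ × (Fin n → ℕ), r ^ (∑ i : Fin (n+1), (e q) i) := (e.tsum_eq _).symm
      _ = ∑' q : ℕ × (Fin n → ℕ), r ^ q.1 * r ^ (∑ i, q.2 i) := tsum_congr hcomp
      _ = (∑' m : ℕ, r ^ m) * ∑' k : Fin n → ℕ, r ^ (∑ i, k i) := by
          refine (tsum_mul_tsum_of_summable_norm (f := fun m : ℕ => r ^ m) (g := fun k : Fin n → ℕ => r ^ (∑ i, k i)) ?_ ?_).symm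
          · exact hg.congr fun m => (Real.norm_of_nonneg (pow_nonneg h0 m)).symm
          · exact ih.1.congr fun k => (Real.norm_of_nonneg (pow_nonneg h0 _)).symm
      _ = (1 - r)⁻¹ ^ (n+1) := by
          rw [tsum_geometric_of_lt_one h0 h1, ih.2, pow_succ]
          ring

open Finset

lemma geomPiMul {r : ℝ} (h0 : 0 ≤ r) (h1 : r < 1) (n : ℕ)
    (hpi : ∀ m : ℕ, (Summable fun k : Fin m → ℕ => r ^ (∑ i, k i)) ∧
      (∑' k : Fin m → ℕ, r ^ (∑ i, k i)) = (1 - r)⁻¹ ^ m) :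
    (Summable fun k : Fin n → ℕ => ((∑ i, k i : ℕ) : ℝ) * r ^ (∑ i, k i)) ∧
      (∑' k : Fin n → ℕ, ((∑ i, k i : ℕ) : ℝ) * r ^ (∑ i, k i))
        = n * (r * (1 - r)⁻¹) * (1 - r)⁻¹ ^ n := by
  have hrn : ‖r‖ < 1 := by rw [Real.norm_of_nonneg h0]; exact h1
  have hm : Summable fun m : ℕ => (m : ℝ) * r ^ m := by
    simpa using summable_pow_mul_geometric_of_norm_lt_one 1 hrn
  have hmt : (∑' m : ℕ, (m : ℝ) * r ^ m) = r * (1 - r)⁻¹ * (1 - r)⁻¹ := by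
    rw [tsum_coe_mul_geometric_of_norm_lt_one hrn]
    rw [div_eq_mul_inv, sq, mul_inv]
    ring
  have h1r0 : (0:ℝ) ≤ (1 - r)⁻¹ := by
    have : (0:ℝ) < 1 - r := by linarith
    positivity
  induction n with
  | zero =>
    constructor
    · exact Summable.of_finite
    · rw [tsum_eq_single (default : Fin 0 → ℕ)
        (by intro b hb; exact absurd (Subsingleton.elim b default) hb)]
      simp
  | succ n ih =>
    let e : (ℕ × (Fin n → ℕ)) ≃ (Fin (n+1) → ℕ) := Fin.consEquiv fun _ => ℕ
    have hg := summable_geometric_of_lt_one h0 h1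
    have hcomp : ∀ q : ℕ × (Fin n → ℕ),
        ((∑ i : Fin (n+1), (e q) i : ℕ) : ℝ) * r ^ (∑ i : Fin (n+1), (e q) i)
          = (q.1 : ℝ) * r ^ q.1 * r ^ (∑ i, q.2 i)
            + r ^ q.1 * (((∑ i, q.2 i : ℕ) : ℝ) * r ^ (∑ i, q.2 i)) := by
      intro q
      have he : e q = Fin.cons q.1 q.2 := rfl
      rw [he, Fin.sum_cons, pow_add]
      push_cast
      ring
    have hF : Summable fun q : ℕ × (Fin n → ℕ) => (q.1 : ℝ) * r ^ q.1 * r ^ (∑ i, q.2 i) := by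
      apply Summable.mul_of_nonneg hm (hpi n).1
      · exact fun m => mul_nonneg (Nat.cast_nonneg m) (pow_nonneg h0 m)
      · exact fun k => pow_nonneg h0 _
    have hG : Summable fun q : ℕ × (Fin n → ℕ) =>
        r ^ q.1 * (((∑ i, q.2 i : ℕ) : ℝ) * r ^ (∑ i, q.2 i)) := by
      apply Summable.mul_of_nonneg hg ih.1
      · exact fun m => pow_nonneg h0 m
      · exact fun k => mul_nonneg (Nat.cast_nonneg _) (pow_nonneg h0 _)
    have hsum2 : Summable fun q : ℕ × (Fin n → ℕ) =>
        (q.1 : ℝ) * r ^ q.1 * r ^ (∑ i, q.2 i)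
          + r ^ q.1 * (((∑ i, q.2 i : ℕ) : ℝ) * r ^ (∑ i, q.2 i)) := hF.add hG
    have hs : Summable fun k : Fin (n+1) → ℕ => ((∑ i, k i : ℕ) : ℝ) * r ^ (∑ i, k i) := by
      rw [← e.summable_iff]
      exact hsum2.congr fun q => (hcomp q).symm
    refine ⟨hs, ?_⟩
    have hFt : (∑' q : ℕ × (Fin n → ℕ), (q.1 : ℝ) * r ^ q.1 * r ^ (∑ i, q.2 i))
        = (r * (1 - r)⁻¹ * (1 - r)⁻¹) * (1 - r)⁻¹ ^ n := by
      refine ((tsum_mul_tsum_of_summable_norm (f := fun m : ℕ => (m : ℝ) * r ^ m)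
        (g := fun k : Fin n → ℕ => r ^ (∑ i, k i)) ?_ ?_).symm).trans
          (by rw [hmt, (hpi n).2])
      · exact hm.congr fun m => (Real.norm_of_nonneg
          (mul_nonneg (Nat.cast_nonneg m) (pow_nonneg h0 m))).symm
      · exact (hpi n).1.congr fun k => (Real.norm_of_nonneg (pow_nonneg h0 _)).symm
    have hGt : (∑' q : ℕ × (Fin n → ℕ),
        r ^ q.1 * (((∑ i, q.2 i : ℕ) : ℝ) * r ^ (∑ i, q.2 i)))
        = (1 - r)⁻¹ * (n * (r * (1 - r)⁻¹) * (1 - r)⁻¹ ^ n) := by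
      refine ((tsum_mul_tsum_of_summable_norm (f := fun m : ℕ => r ^ m)
        (g := fun k : Fin n → ℕ => ((∑ i, k i : ℕ) : ℝ) * r ^ (∑ i, k i)) ?_ ?_).symm).trans
          (by rw [tsum_geometric_of_lt_one h0 h1, ih.2])
      · exact hg.congr fun m => (Real.norm_of_nonneg (pow_nonneg h0 m)).symm
      · exact ih.1.congr fun k => (Real.norm_of_nonneg
          (mul_nonneg (Nat.cast_nonneg _) (pow_nonneg h0 _))).symm
    calc (∑' k : Fin (n+1) → ℕ, ((∑ i, k i : ℕ) : ℝ) * r ^ (∑ i, k i))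
        = ∑' q : ℕ × (Fin n → ℕ),
            ((∑ i : Fin (n+1), (e q) i : ℕ) : ℝ) * r ^ (∑ i : Fin (n+1), (e q) i) :=
          (e.tsum_eq _).symm
      _ = ∑' q : ℕ × (Fin n → ℕ), ((q.1 : ℝ) * r ^ q.1 * r ^ (∑ i, q.2 i)
            + r ^ q.1 * (((∑ i, q.2 i : ℕ) : ℝ) * r ^ (∑ i, q.2 i))) := tsum_congr hcomp
      _ = (r * (1 - r)⁻¹ * (1 - r)⁻¹) * (1 - r)⁻¹ ^ n
            + (1 - r)⁻¹ * (n * (r * (1 - r)⁻¹) * (1 - r)⁻¹ ^ n) := by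
          rw [Summable.tsum_add hF hG, hFt, hGt]
      _ = (n + 1 : ℕ) * (r * (1 - r)⁻¹) * (1 - r)⁻¹ ^ (n + 1) := by
          push_cast
          ring

/-- **Regret of follow-the-perturbed-leader with geometric sample perturbations.** With a
finite parameter space `Fin d`, an optimization oracle `M` on frequency vectors, perturbation
parameter `p = √(d/T)`, and the random perturbation `k` with i.i.d. geometric(p) coordinates
(outcome weight `p^d (1−p)^{∑ k θ'}`), the algorithm that draws `k` once and at round `t`
plays `M(φ t + k)`, where `φ t` is the frequency vector of the first `t` parameters, has
expected regret at most `2H√(dT)` against any fixed action and any oblivious sequence. -/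
theorem geometric_ftpl_regret (d T : ℕ) (hd : 1 ≤ d) (hdT : d ≤ T) (H : ℝ) (hH : 0 ≤ H)
    {A : Type*} (u : A → Fin d → ℝ) (hu : ∀ a θ, 0 ≤ u a θ ∧ u a θ ≤ H)
    (M : (Fin d → ℕ) → A)
    (hM : ∀ (φ : Fin d → ℕ) (a : A),
      ∑ θ' : Fin d, (φ θ' : ℝ) * u (M φ) θ' ≥ ∑ θ' : Fin d, (φ θ' : ℝ) * u a θ')
    (θ : Fin T → Fin d) :
    ∀ a : A,
      ∑' k : Fin d → ℕ,
          Real.sqrt ((d : ℝ) / T) ^ d * (1 - Real.sqrt ((d : ℝ) / T)) ^ (∑ θ' : Fin d, k θ') *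
            (∑ t : Fin T, (u a (θ t) -
              u (M ((fun θ' => (Finset.univ.filter
                  (fun s : Fin T => (s : ℕ) < (t : ℕ) ∧ θ s = θ')).card) + k)) (θ t)))
        ≤ 2 * H * Real.sqrt ((d : ℝ) * T) := by
  intro a
  classical
  have hT : 1 ≤ T := hd.trans hdT
  have hT0 : (0:ℝ) < T := by exact_mod_cast hT
  have hd0 : (0:ℝ) < d := by exact_mod_cast hd
  set p : ℝ := Real.sqrt ((d:ℝ)/T) with hpdef
  have hp0 : 0 < p := Real.sqrt_pos.2 (div_pos hd0 hT0)
  have hp1 : p ≤ 1 := Real.sqrt_le_one.2 ((div_le_one hT0).2 (by exact_mod_cast hdT))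
  set r : ℝ := 1 - p with hrdef
  have hr0 : 0 ≤ r := by rw [hrdef]; linarith
  have hr1 : r < 1 := by rw [hrdef]; linarith
  have h1r : 1 - r = p := by rw [hrdef]; ring
  -- frequency vectors
  set ψ : ℕ → Fin d → ℕ := fun n θ' => (Finset.univ.filter
      (fun s : Fin T => (s : ℕ) < n ∧ θ s = θ')).card with hψdef
  -- weights
  set w : (Fin d → ℕ) → ℝ := fun k => p ^ d * r ^ (∑ i : Fin d, k i) with hwdef
  have hw0 : ∀ k, 0 ≤ w k := fun k => mul_nonneg (pow_nonneg hp0.le d) (pow_nonneg hr0 _)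
  have hw : Summable w := ((geomPi hr0 hr1 d).1).mul_left (p ^ d)
  have hpp : p ^ d * p⁻¹ ^ d = 1 := by
    rw [← mul_pow, mul_inv_cancel₀ hp0.ne', one_pow]
  have hW : ∑' k, w k = 1 := by
    rw [hwdef, tsum_mul_left, (geomPi hr0 hr1 d).2, h1r, hpp]
  -- summability of bounded test functions
  have hsbdd : ∀ (g : (Fin d → ℕ) → ℝ) (C : ℝ), (∀ k, |g k| ≤ C) →
      Summable (fun k => w k * g k) := by
    intro g C hg
    refine Summable.of_norm_bounded (hw.mul_left C) fun k => ?_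
    rw [Real.norm_eq_abs, abs_mul, abs_of_nonneg (hw0 k), mul_comm]
    exact mul_le_mul_of_nonneg_right (hg k) (hw0 k)
  -- expectation of the total perturbation
  have hwS : Summable (fun k : Fin d → ℕ => w k * ((∑ i, k i : ℕ) : ℝ)) := by
    refine (((geomPiMul hr0 hr1 d (geomPi hr0 hr1)).1).mul_left (p ^ d)).congr fun k => ?_
    rw [hwdef]; ring
  have hwSt : ∑' k : Fin d → ℕ, w k * ((∑ i, k i : ℕ) : ℝ) = (d : ℝ) * r * p⁻¹ := by
    have h1 : ∀ k : Fin d → ℕ, w k * ((∑ i, k i : ℕ) : ℝ)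
        = p ^ d * (((∑ i, k i : ℕ) : ℝ) * r ^ (∑ i, k i)) := by
      intro k; rw [hwdef]; ring
    rw [tsum_congr h1, tsum_mul_left, (geomPiMul hr0 hr1 d (geomPi hr0 hr1)).2, h1r]
    calc p ^ d * ((d : ℝ) * (r * p⁻¹) * p⁻¹ ^ d)
        = (p ^ d * p⁻¹ ^ d) * ((d : ℝ) * r * p⁻¹) := by ring
      _ = (d : ℝ) * r * p⁻¹ := by rw [hpp, one_mul]
  -- arithmetic with square roots
  have hsqdT : Real.sqrt ((d : ℝ) * T) * p = d := by
    rw [hpdef, ← Real.sqrt_mul (by positivity)]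
    rw [show (d : ℝ) * T * ((d : ℝ) / T) = (d : ℝ) * d by field_simp]
    exact Real.sqrt_mul_self hd0.le
  have hdp : (d : ℝ) * p⁻¹ = Real.sqrt ((d : ℝ) * T) := by
    rw [← div_eq_mul_inv, div_eq_iff hp0.ne']
    linarith [hsqdT]
  have hTp : (T : ℝ) * p = Real.sqrt ((d : ℝ) * T) := by
    have h2 : ((T : ℝ) * p) * p = (d : ℝ) := by
      rw [mul_assoc, hpdef, Real.mul_self_sqrt (by positivity)]
      field_simp
    have h3 := hsqdT
    have hTp0 : 0 ≤ (T:ℝ) * p := by positivity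
    nlinarith [Real.sqrt_nonneg ((d:ℝ) * T)]
  -- basic facts about ψ
  have hψ0 : ψ 0 = 0 := by
    funext i
    simp [hψdef]
  have hψsucc : ∀ t : Fin T, ψ ((t : ℕ) + 1) = ψ (t : ℕ) + Pi.single (θ t) 1 := by
    intro t
    funext j
    simp only [hψdef, Pi.add_apply, Pi.single_apply, Finset.card_filter]
    have h2 : (if j = θ t then 1 else 0)
        = ∑ s : Fin T, if s = t then (if θ s = j then 1 else 0) else 0 := by
      rw [Finset.sum_ite_eq' Finset.univ t (fun s => if θ s = j then 1 else 0)]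
      by_cases h : θ t = j
      · simp [h]
      · simp only [h, if_false]
        have : ¬ j = θ t := fun hh => h hh.symm
        simp [this]
    rw [h2, ← Finset.sum_add_distrib]
    refine Finset.sum_congr rfl fun s _ => ?_
    by_cases hst : s = t
    · subst hst
      by_cases hj : θ s = j <;> simp [hj, Nat.lt_succ_self]
    · have hv : (s : ℕ) ≠ (t : ℕ) := fun h => hst (Fin.val_injective h)
      have hlt : ((s : ℕ) < (t : ℕ) + 1) ↔ ((s : ℕ) < (t : ℕ)) := by omega
      simp [hst, hlt]
  -- fiberwise sum
  have hfsum : ∀ b : A, ∑ i : Fin d, ((ψ T) i : ℝ) * u b i = ∑ t : Fin T, u b (θ t) := by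
    intro b
    have h1 : ∀ i, ((ψ T) i : ℝ) = ∑ s : Fin T, if θ s = i then (1:ℝ) else 0 := by
      intro i
      rw [hψdef]
      simp only [Finset.card_filter]
      push_cast
      exact Finset.sum_congr rfl fun s _ => by simp [s.isLt]
    calc ∑ i : Fin d, ((ψ T) i : ℝ) * u b i
        = ∑ i : Fin d, ∑ s : Fin T, (if θ s = i then u b i else 0) := by
          refine Finset.sum_congr rfl fun i _ => ?_
          rw [h1 i, Finset.sum_mul]
          exact Finset.sum_congr rfl fun s _ => by by_cases h : θ s = i <;> simp [h]
      _ = ∑ s : Fin T, ∑ i : Fin d, (if θ s = i then u b i else 0) := Finset.sum_comm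
      _ = ∑ t : Fin T, u b (θ t) := by
          refine Finset.sum_congr rfl fun s _ => ?_
          rw [Finset.sum_ite_eq Finset.univ (θ s) (u b)]
          simp
  -- be-the-leader lemma
  have hsplitG : ∀ (k : Fin d → ℕ) (t : Fin T) (x : A),
      ∑ i : Fin d, ((ψ ((t:ℕ)+1) + k) i : ℝ) * u x i
        = (∑ i : Fin d, ((ψ (t:ℕ) + k) i : ℝ) * u x i) + u x (θ t) := by
    intro k t x
    rw [hψsucc t]
    have hper : ∀ i : Fin d, (((ψ (t:ℕ) + Pi.single (θ t) 1 + k : Fin d → ℕ) i : ℕ) : ℝ) * u x i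
        = ((ψ (t:ℕ) + k) i : ℝ) * u x i + (if i = θ t then u x i else 0) := by
      intro i
      simp only [Pi.add_apply, Pi.single_apply]
      by_cases h : i = θ t
      · subst h
        simp only [if_pos rfl]
        push_cast
        ring
      · simp [h]
    rw [Finset.sum_congr rfl (fun i _ => hper i), Finset.sum_add_distrib,
      Finset.sum_ite_eq' Finset.univ (θ t) (u x)]
    simp
  have btl : ∀ (k : Fin d → ℕ) (n : ℕ), n ≤ T → ∀ b : A,
      ∑ i : Fin d, ((ψ n + k) i : ℝ) * u b i
        ≤ (∑ t ∈ Finset.univ.filter (fun t : Fin T => (t : ℕ) < n),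
            u (M (ψ ((t:ℕ)+1) + k)) (θ t))
          + ∑ i : Fin d, ((ψ 0 + k) i : ℝ) * u (M (ψ 0 + k)) i := by
    intro k n
    induction n with
    | zero =>
      intro _ b
      have h := hM (ψ 0 + k) b
      have hfil : Finset.univ.filter (fun t : Fin T => (t : ℕ) < 0) = ∅ := by
        apply Finset.filter_false_of_mem; intro t _; omega
      rw [hfil]
      simpa using h
    | succ n IH =>
      intro hn b
      have hnT : n < T := hn
      set t : Fin T := ⟨n, hnT⟩ with htdef
      have htval : (t : ℕ) = n := rfl
      have h2 := hM (ψ (n+1) + k) b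
      have h3 := IH (le_of_lt hnT) (M (ψ (n+1) + k))
      have hfil : Finset.univ.filter (fun t' : Fin T => (t' : ℕ) < n + 1)
          = insert t (Finset.univ.filter (fun t' : Fin T => (t' : ℕ) < n)) := by
        ext s
        simp only [Finset.mem_filter, Finset.mem_univ, true_and, Finset.mem_insert]
        constructor
        · intro hs
          rcases Nat.lt_succ_iff_lt_or_eq.1 hs with h | h
          · exact Or.inr h
          · exact Or.inl (Fin.ext h)
        · rintro (h | h)
          · rw [h]; exact Nat.lt_succ_self n
          · omega
      have htn : t ∉ Finset.univ.filter (fun t' : Fin T => (t' : ℕ) < n) := by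
        simp [htval]
      rw [hfil, Finset.sum_insert htn]
      have hs1 : ∑ i : Fin d, ((ψ (n+1) + k) i : ℝ) * u b i
          ≤ ∑ i : Fin d, ((ψ (n+1) + k) i : ℝ) * u (M (ψ (n+1) + k)) i := h2
      have hs2 : ∑ i : Fin d, ((ψ (n+1) + k) i : ℝ) * u (M (ψ (n+1) + k)) i
          = (∑ i : Fin d, ((ψ n + k) i : ℝ) * u (M (ψ (n+1) + k)) i)
            + u (M (ψ (n+1) + k)) (θ t) := by
        have := hsplitG k t (M (ψ (n+1) + k))
        rw [htval] at this
        exact this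
      have : u (M (ψ ((t:ℕ)+1) + k)) (θ t) = u (M (ψ (n+1) + k)) (θ t) := by rw [htval]
      rw [this]
      linarith
  -- deterministic regret bound
  set R : (Fin d → ℕ) → ℝ :=
    fun k => ∑ t : Fin T, (u a (θ t) - u (M (ψ (t:ℕ) + k)) (θ t)) with hRdef
  set D : (Fin d → ℕ) → ℝ :=
    fun k => ∑ t : Fin T,
      (u (M (ψ ((t:ℕ)+1) + k)) (θ t) - u (M (ψ (t:ℕ) + k)) (θ t)) with hDdef
  have hdet : ∀ k, R k ≤ D k + H * ((∑ i, k i : ℕ) : ℝ) := by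
    intro k
    have h1 := btl k T le_rfl a
    have hfilT : Finset.univ.filter (fun t : Fin T => (t:ℕ) < T) = Finset.univ := by
      apply Finset.filter_true_of_mem; intro t _; exact t.isLt
    rw [hfilT] at h1
    have h2 : ∑ i : Fin d, ((ψ T + k) i : ℝ) * u a i
        = (∑ t : Fin T, u a (θ t)) + ∑ i : Fin d, (k i : ℝ) * u a i := by
      have hper : ∀ i : Fin d, ((ψ T + k) i : ℝ) * u a i
          = (ψ T i : ℝ) * u a i + (k i : ℝ) * u a i := by
        intro i; simp only [Pi.add_apply]; push_cast; ring
      rw [Finset.sum_congr rfl fun i _ => hper i, Finset.sum_add_distrib, hfsum a]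
    have h0k : ψ 0 + k = k := by rw [hψ0]; simp
    rw [h2, h0k] at h1
    have h3 : ∑ i : Fin d, (k i : ℝ) * u (M k) i ≤ H * ((∑ i, k i : ℕ):ℝ) := by
      calc ∑ i : Fin d, (k i:ℝ) * u (M k) i
          ≤ ∑ i : Fin d, (k i:ℝ) * H := Finset.sum_le_sum fun i _ =>
            mul_le_mul_of_nonneg_left (hu _ _).2 (Nat.cast_nonneg _)
        _ = H * ((∑ i, k i : ℕ):ℝ) := by rw [← Finset.sum_mul]; push_cast; ring
    have h4 : 0 ≤ ∑ i : Fin d, (k i : ℝ) * u a i :=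
      Finset.sum_nonneg fun i _ => mul_nonneg (Nat.cast_nonneg _) (hu a i).1
    have hRk : R k = (∑ t : Fin T, u a (θ t))
        - ∑ t : Fin T, u (M (ψ (t:ℕ) + k)) (θ t) := by
      rw [hRdef]; exact Finset.sum_sub_distrib _ _
    have hDk : D k = (∑ t : Fin T, u (M (ψ ((t:ℕ)+1) + k)) (θ t))
        - ∑ t : Fin T, u (M (ψ (t:ℕ) + k)) (θ t) := by
      rw [hDdef]; exact Finset.sum_sub_distrib _ _
    rw [hRk, hDk]
    linarith
  -- summability of the per-round terms
  have hsft : ∀ t : Fin T, Summable (fun k => w k * u (M (ψ ((t:ℕ)+1) + k)) (θ t)) :=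
    fun t => hsbdd _ H (fun k => by rw [abs_of_nonneg (hu _ _).1]; exact (hu _ _).2)
  have hsgt : ∀ t : Fin T, Summable (fun k => w k * u (M (ψ (t:ℕ) + k)) (θ t)) :=
    fun t => hsbdd _ H (fun k => by rw [abs_of_nonneg (hu _ _).1]; exact (hu _ _).2)
  -- stability
  have hstab : ∀ t : Fin T,
      (∑' k, w k * u (M (ψ ((t:ℕ)+1) + k)) (θ t))
        - (∑' k, w k * u (M (ψ (t:ℕ) + k)) (θ t)) ≤ p * H := by
    intro t
    set e : Fin d → ℕ := Pi.single (θ t) 1 with hedef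
    have hse : ∑ i, e i = 1 := by simp [hedef, Pi.single_apply]
    have hwe : ∀ k : Fin d → ℕ, w (k + e) = r * w k := by
      intro k
      have hsum : ∑ i, (k + e) i = (∑ i, k i) + 1 := by
        simp only [Pi.add_apply]
        rw [Finset.sum_add_distrib, hse]
      rw [hwdef]
      simp only
      rw [hsum, pow_succ]
      ring
    have hkey : r * ∑' k, w k * u (M (ψ ((t:ℕ)+1) + k)) (θ t)
        ≤ ∑' k, w k * u (M (ψ (t:ℕ) + k)) (θ t) := by
      rw [← tsum_mul_left]
      refine Summable.tsum_le_tsum_of_inj (fun k => k + e) ?_ ?_ ?_ ((hsft t).mul_left r) (hsgt t)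
      · intro k1 k2 h
        funext i
        have h2 := congrFun h i
        simp only [Pi.add_apply] at h2
        omega
      · intro c _
        exact mul_nonneg (hw0 c) (hu _ _).1
      · intro b
        refine le_of_eq ?_
        have h1 : ψ ((t:ℕ)+1) + b = ψ (t:ℕ) + (b + e) := by
          rw [hψsucc t, ← hedef, add_assoc, add_comm e b]
        rw [hwe b, h1]
        ring
    have hfb : ∑' k, w k * u (M (ψ ((t:ℕ)+1) + k)) (θ t) ≤ H := by
      calc ∑' k, w k * u (M (ψ ((t:ℕ)+1) + k)) (θ t)
          ≤ ∑' k, H * w k := Summable.tsum_le_tsum (fun k => by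
            rw [mul_comm H (w k)]
            exact mul_le_mul_of_nonneg_left (hu _ _).2 (hw0 k)) (hsft t) (hw.mul_left H)
        _ = H := by rw [tsum_mul_left, hW, mul_one]
    have hx : p * (∑' k, w k * u (M (ψ ((t:ℕ)+1) + k)) (θ t))
        = (∑' k, w k * u (M (ψ ((t:ℕ)+1) + k)) (θ t))
          - r * ∑' k, w k * u (M (ψ ((t:ℕ)+1) + k)) (θ t) := by
      rw [← h1r]; ring
    have hy := mul_le_mul_of_nonneg_left hfb hp0.le
    linarith
  -- summability of the regret terms
  have habsH : ∀ x y : ℝ, 0 ≤ x → x ≤ H → 0 ≤ y → y ≤ H → |x - y| ≤ H := by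
    intro x y h1 h2 h3 h4; rw [abs_le]; constructor <;> linarith
  have hRbd : ∀ k, |R k| ≤ T * H := by
    intro k
    rw [hRdef]
    calc |∑ t : Fin T, (u a (θ t) - u (M (ψ (t:ℕ) + k)) (θ t))|
        ≤ ∑ t : Fin T, |u a (θ t) - u (M (ψ (t:ℕ) + k)) (θ t)| :=
          Finset.abs_sum_le_sum_abs _ _
      _ ≤ ∑ _t : Fin T, H := Finset.sum_le_sum fun t _ =>
          habsH _ _ (hu _ _).1 (hu _ _).2 (hu _ _).1 (hu _ _).2
      _ = T * H := by rw [Finset.sum_const, Finset.card_univ, Fintype.card_fin, nsmul_eq_mul]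
  have hDbd : ∀ k, |D k| ≤ T * H := by
    intro k
    rw [hDdef]
    calc |∑ t : Fin T, (u (M (ψ ((t:ℕ)+1) + k)) (θ t) - u (M (ψ (t:ℕ) + k)) (θ t))|
        ≤ ∑ t : Fin T, |u (M (ψ ((t:ℕ)+1) + k)) (θ t) - u (M (ψ (t:ℕ) + k)) (θ t)| :=
          Finset.abs_sum_le_sum_abs _ _
      _ ≤ ∑ _t : Fin T, H := Finset.sum_le_sum fun t _ =>
          habsH _ _ (hu _ _).1 (hu _ _).2 (hu _ _).1 (hu _ _).2
      _ = T * H := by rw [Finset.sum_const, Finset.card_univ, Fintype.card_fin, nsmul_eq_mul]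
  have hsR : Summable (fun k => w k * R k) := hsbdd R (T*H) hRbd
  have hsD : Summable (fun k => w k * D k) := hsbdd D (T*H) hDbd
  -- assembly
  have step1 : ∑' k, w k * R k
      ≤ ∑' k, (w k * D k + H * (w k * ((∑ i, k i : ℕ):ℝ))) := by
    refine Summable.tsum_le_tsum (fun k => ?_) hsR (hsD.add (hwS.mul_left H))
    have h2 := mul_le_mul_of_nonneg_left (hdet k) (hw0 k)
    calc w k * R k ≤ w k * (D k + H * ((∑ i, k i : ℕ):ℝ)) := h2
      _ = w k * D k + H * (w k * ((∑ i, k i : ℕ):ℝ)) := by ring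
  have step2 : ∑' k, (w k * D k + H * (w k * ((∑ i, k i : ℕ):ℝ)))
      = (∑' k, w k * D k) + H * ((d:ℝ) * r * p⁻¹) := by
    rw [Summable.tsum_add hsD (hwS.mul_left H), tsum_mul_left, hwSt]
  have step3 : ∑' k, w k * D k ≤ T * (p * H) := by
    have hDsplit : ∀ k, w k * D k = ∑ t : Fin T,
        (w k * u (M (ψ ((t:ℕ)+1) + k)) (θ t) - w k * u (M (ψ (t:ℕ) + k)) (θ t)) := by
      intro k
      rw [hDdef, Finset.mul_sum]
      exact Finset.sum_congr rfl fun t _ => by ring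
    rw [tsum_congr hDsplit, Summable.tsum_finsetSum (fun t _ => ((hsft t).sub (hsgt t)))]
    calc ∑ t : Fin T, ∑' k, (w k * u (M (ψ ((t:ℕ)+1) + k)) (θ t)
            - w k * u (M (ψ (t:ℕ) + k)) (θ t))
        = ∑ t : Fin T, ((∑' k, w k * u (M (ψ ((t:ℕ)+1) + k)) (θ t))
            - ∑' k, w k * u (M (ψ (t:ℕ) + k)) (θ t)) :=
          Finset.sum_congr rfl fun t _ => Summable.tsum_sub (hsft t) (hsgt t)
      _ ≤ ∑ _t : Fin T, p * H := Finset.sum_le_sum fun t _ => hstab t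
      _ = T * (p * H) := by rw [Finset.sum_const, Finset.card_univ, Fintype.card_fin, nsmul_eq_mul]
  have hfin : ∑' k, w k * R k ≤ 2 * H * Real.sqrt ((d:ℝ) * T) := by
    have h1 : (T:ℝ) * (p * H) = H * Real.sqrt ((d:ℝ)*T) := by rw [← hTp]; ring
    have h2 : H * ((d:ℝ) * r * p⁻¹) ≤ H * Real.sqrt ((d:ℝ)*T) := by
      refine mul_le_mul_of_nonneg_left ?_ hH
      calc (d:ℝ) * r * p⁻¹ ≤ (d:ℝ) * 1 * p⁻¹ := by
            refine mul_le_mul_of_nonneg_right ?_ (by positivity)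
            refine mul_le_mul_of_nonneg_left ?_ hd0.le
            rw [hrdef]; linarith
        _ = (d:ℝ) * p⁻¹ := by ring
        _ = Real.sqrt ((d:ℝ)*T) := hdp
    linarith
  exact hfin
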